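/- arXiv:2509.07663 — 2 statements merged into one kernel-verified Lean document; each statement's English description precedes it below -/
import Mathlib

section
/- Let f : Z → Y be a local homeomorphism between locally compact Hausdorff spaces, A an abelian group, and g : Z → A a compactly supported locally constant function. Then for each y ∈ Y the fiber sum (f_* g)(y) = Σ_{z ∈ f⁻¹(y)} g(z) is a finite sum, and the resulting function f_* g : Y → A is compactly supported and locally constant. Moreover f_* : C_c(Z, A) → C_c(Y, A) is a group homomorphism. -/
open Function Set

lemma auxFiberFinite {Z Y : Type*} [TopologicalSpace Z] [TopologicalSpace Y] [T1Space Y]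
    {f : Z → Y} (hf : IsLocalHomeomorph f) {K : Set Z} (hK : IsCompact K)
    (y : Y) : (K ∩ f ⁻¹' {y}).Finite := by
  have hcl : IsClosed (f ⁻¹' {y}) := isClosed_singleton.preimage hf.continuous
  have hcomp : IsCompact (K ∩ f ⁻¹' {y}) := hK.inter_right hcl
  have hdisc : DiscreteTopology ↥(K ∩ f ⁻¹' {y}) := by
    rw [discreteTopology_subtype_iff]
    intro z hz
    obtain ⟨e, hze, hfe⟩ := hf z
    rw [Filter.inf_principal_eq_bot]
    refine mem_nhdsWithin.2 ⟨e.source, e.open_source, hze, ?_⟩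
    rintro w ⟨hws, hwz⟩ ⟨-, hwy⟩
    apply hwz
    have : f w = f z := by
      simp only [mem_preimage, mem_singleton_iff] at hwy
      rw [hwy, hz.2]
    exact e.injOn hws hze (by rw [← hfe]; exact this)
  exact hcomp.finite (isDiscrete_iff_discreteTopology.2 hdisc)

lemma auxLocConst {Z Y A : Type*} [TopologicalSpace Z] [TopologicalSpace Y]
    [T2Space Z] [T2Space Y] [AddCommGroup A]
    {f : Z → Y} (hf : IsLocalHomeomorph f)
    {g : Z → A} (hg : IsLocallyConstant g) (hgc : HasCompactSupport g) (y₀ : Y) :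
    ∃ V : Set Y, IsOpen V ∧ y₀ ∈ V ∧ ∀ y ∈ V,
      (∑ᶠ z ∈ f ⁻¹' {y}, g z) = ∑ᶠ z ∈ f ⁻¹' {y₀}, g z := by
  classical
  set F : Set Z := tsupport g ∩ f ⁻¹' {y₀} with hFdef
  have hF : F.Finite := auxFiberFinite hf hgc y₀
  obtain ⟨W, hW, hWd⟩ := hF.t2_separation
  have hf2 := hf
  choose e hmem hfe using hf2
  set O : Z → Set Z := fun z => W z ∩ (e z).source ∩ g ⁻¹' {g z} with hOdef
  have hOopen : ∀ z, IsOpen (O z) := fun z =>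
    (((hW z).2.inter (e z).open_source).inter (hg.isOpen_fiber (g z)))
  have hzO : ∀ z, z ∈ O z := fun z => ⟨⟨(hW z).1, hmem z⟩, rfl⟩
  have hOinj : ∀ z, Set.InjOn f (O z) := by
    intro z a ha b hb hab
    refine (e z).injOn ha.1.2 hb.1.2 ?_
    rw [← hfe z]; exact hab
  set K : Set Z := tsupport g \ ⋃ z ∈ F, O z with hKdef
  have hKcl : IsClosed K := (isClosed_tsupport g).sdiff (isOpen_biUnion fun z _ => hOopen z)
  have hKcomp : IsCompact K := hgc.of_isClosed_subset hKcl diff_subset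
  have hfKcl : IsClosed (f '' K) := (hKcomp.image hf.continuous).isClosed
  have hy₀K : y₀ ∉ f '' K := by
    rintro ⟨w, ⟨hwt, hwO⟩, hwy⟩
    exact hwO (mem_biUnion ⟨hwt, hwy⟩ (hzO w))
  set V : Set Y := (⋂ z ∈ F, f '' O z) \ f '' K with hVdef
  have hVopen : IsOpen V :=
    ((hF.isOpen_biInter fun z _ => hf.isOpenMap _ (hOopen z)).sdiff hfKcl)
  have hy₀V : y₀ ∈ V := ⟨mem_biInter fun z hz => ⟨z, hzO z, hz.2⟩, hy₀K⟩
  refine ⟨V, hVopen, hy₀V, ?_⟩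
  intro y hy
  have hex : ∀ z : Z, ∃ w, z ∈ F → w ∈ O z ∧ f w = y := by
    intro z
    by_cases hz : z ∈ F
    · obtain ⟨w, hw, hwy⟩ := mem_iInter₂.1 hy.1 z hz
      exact ⟨w, fun _ => ⟨hw, hwy⟩⟩
    · exact ⟨z, fun h => absurd h hz⟩
  choose φ hφ using hex
  have hφinj : Set.InjOn φ F := by
    intro a ha b hb hab
    refine hWd.elim ha hb (Set.not_disjoint_iff.2 ⟨φ a, ((hφ a ha).1).1.1, ?_⟩)
    rw [hab]; exact ((hφ b hb).1).1.1
  have key : f ⁻¹' {y} ∩ support g = (φ '' F) ∩ support g := by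
    ext w
    constructor
    · rintro ⟨hwy, hwsupp⟩
      have hwt : w ∈ tsupport g := subset_tsupport g hwsupp
      have hwK : w ∉ K := by
        intro hwK
        exact hy.2 ⟨w, hwK, hwy⟩
      have hwU : w ∈ ⋃ z ∈ F, O z := by
        by_contra h
        exact hwK ⟨hwt, h⟩
      obtain ⟨z, hz, hwO⟩ := mem_iUnion₂.1 hwU
      refine ⟨⟨z, hz, ?_⟩, hwsupp⟩
      exact hOinj z (hφ z hz).1 hwO (by rw [(hφ z hz).2, hwy])
    · rintro ⟨⟨z, hz, rfl⟩, hsupp⟩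
      exact ⟨(hφ z hz).2, hsupp⟩
  have hval : ∀ z ∈ F, g (φ z) = g z := fun z hz => (hφ z hz).1.2
  calc (∑ᶠ z ∈ f ⁻¹' {y}, g z) = ∑ᶠ z ∈ φ '' F, g z :=
        finsum_mem_inter_support_eq g _ _ key
    _ = ∑ᶠ z ∈ F, g (φ z) := finsum_mem_image hφinj
    _ = ∑ᶠ z ∈ F, g z := finsum_mem_congr rfl hval
    _ = ∑ᶠ z ∈ f ⁻¹' {y₀}, g z := by
        refine finsum_mem_inter_support_eq g _ _ ?_
        ext w
        simp only [hFdef, mem_inter_iff, mem_preimage, mem_singleton_iff]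
        constructor
        · rintro ⟨⟨-, hwy⟩, hs⟩; exact ⟨hwy, hs⟩
        · rintro ⟨hwy, hs⟩; exact ⟨⟨subset_tsupport g hs, hwy⟩, hs⟩

/-- Fiber-sum pushforward along a local homeomorphism between locally compact Hausdorff
spaces: for a compactly supported locally constant function `g : Z → A`, for each `y`
only finitely many points of the fiber `f⁻¹(y)` lie in the support of `g` (so the fiber
sum is a finite sum), the fiberwise sum `f_* g` is compactly supported and locally
constant, and the pushforward is additive (a group homomorphism `C_c(Z,A) → C_c(Y,A)`). -/
theorem pushforward_fiber_sum {Z Y A : Type*}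
    [TopologicalSpace Z] [TopologicalSpace Y]
    [LocallyCompactSpace Z] [T2Space Z] [LocallyCompactSpace Y] [T2Space Y]
    [AddCommGroup A]
    (f : Z → Y) (hf : IsLocalHomeomorph f)
    (g : Z → A) (hg : IsLocallyConstant g) (hgc : HasCompactSupport g) :
    (∀ y : Y, (Function.support g ∩ f ⁻¹' {y}).Finite) ∧
    IsLocallyConstant (fun y => ∑ᶠ z ∈ f ⁻¹' {y}, g z) ∧
    HasCompactSupport (fun y => ∑ᶠ z ∈ f ⁻¹' {y}, g z) ∧
    (∀ g₁ g₂ : Z → A, IsLocallyConstant g₁ → HasCompactSupport g₁ →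
      IsLocallyConstant g₂ → HasCompactSupport g₂ →
      (fun y => ∑ᶠ z ∈ f ⁻¹' {y}, (g₁ + g₂) z) =
        (fun y => ∑ᶠ z ∈ f ⁻¹' {y}, g₁ z) + fun y => ∑ᶠ z ∈ f ⁻¹' {y}, g₂ z) := by
  have hfin : ∀ (g' : Z → A), HasCompactSupport g' →
      ∀ y : Y, (f ⁻¹' {y} ∩ support g').Finite := by
    intro g' hg'c y
    exact ((auxFiberFinite hf hg'c y).subset
      (inter_subset_inter_left _ (subset_tsupport g'))).subset (by rw [inter_comm])
  refine ⟨?_, ?_, ?_, ?_⟩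
  · intro y
    exact (hfin g hgc y).subset (by rw [inter_comm])
  · rw [IsLocallyConstant.iff_exists_open]
    intro y₀
    obtain ⟨V, hVo, hy₀, hV⟩ := auxLocConst hf hg hgc y₀
    exact ⟨V, hVo, hy₀, hV⟩
  · have hsub : support (fun y => ∑ᶠ z ∈ f ⁻¹' {y}, g z) ⊆ f '' tsupport g := by
      intro y hy
      obtain ⟨z, hz, hgz⟩ := exists_ne_zero_of_finsum_mem_ne_zero hy
      exact ⟨z, subset_tsupport g hgz, hz⟩
    have hcpt : IsCompact (f '' tsupport g) := hgc.image hf.continuous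
    exact IsCompact.of_isClosed_subset hcpt isClosed_closure
      (closure_minimal hsub hcpt.isClosed)
  · intro g₁ g₂ _ h₁c _ h₂c
    funext y
    simp only [Pi.add_apply]
    exact finsum_mem_add_distrib' (hfin g₁ h₁c y) (hfin g₂ h₂c y)
end

section
/- Let X_0 ⊆ X_1 ⊆ X_2 ⊆ ⋯ be a sequence of T1 topological spaces where each inclusion is a closed embedding, with basepoint in X_0, and let X = colim_i X_i be the colimit with the final topology. Then for every n ≥ 0 the canonical map colim_i π_n(X_i) → π_n(X) is a bijection (an isomorphism of groups for n ≥ 1). -/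
open Topology.Homotopy unitInterval


-- aux: every compact set lies in some A i
theorem compact_subset_of_seq {X : Type*} [TopologicalSpace X]
    (A : ℕ → Set X) (hmono : Monotone A)
    (hT1 : ∀ i, T1Space (A i))
    (hcover : ⋃ i, A i = Set.univ)
    (hfinal : ∀ S : Set X, IsOpen S ↔ ∀ i, IsOpen ((↑·) ⁻¹' S : Set (A i)))
    {K : Set X} (hK : IsCompact K) : ∃ i, K ⊆ A i := by
  by_contra h
  push_neg at h
  choose x hxK hxA using fun i => Set.not_subset.mp (h i)
  -- every subset of range x is closed
  have hsub : ∀ T : Set X, T ⊆ Set.range x → IsClosed T := by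
    intro T hT
    rw [← isOpen_compl_iff, hfinal]
    intro i
    have : ((↑·) ⁻¹' Tᶜ : Set (A i)) = ((↑·) ⁻¹' T : Set (A i))ᶜ := rfl
    rw [this, isOpen_compl_iff]
    have hfin : (((↑·) ⁻¹' T : Set (A i))).Finite := by
      have : (((↑·) ⁻¹' T : Set (A i))) ⊆ (↑·) ⁻¹' (x '' Set.Iio i) := by
        rintro ⟨a, ha⟩ hmem
        obtain ⟨j, rfl⟩ := hT hmem
        have hj : j < i := by
          by_contra hji
          exact hxA j (hmono (le_of_not_gt hji) ha)
        exact ⟨j, hj, rfl⟩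
      exact Set.Finite.subset (Set.Finite.preimage (Subtype.val_injective.injOn)
        ((Set.finite_Iio i).image x)) this
    haveI := hT1 i
    exact hfin.isClosed
  set S := Set.range x with hS
  have hScl : IsClosed S := hsub S le_rfl
  have hSK : S ⊆ K := by rintro _ ⟨j, rfl⟩; exact hxK j
  have hScomp : IsCompact S := hK.of_isClosed_subset hScl hSK
  -- S is infinite
  have hSinf : S.Infinite := by
    intro hfin
    obtain ⟨m, hm⟩ : ∃ m, S ⊆ A m := by
      have : ∀ p ∈ S, ∃ m, p ∈ A m := by
        intro p _
        have : p ∈ ⋃ i, A i := by rw [hcover]; trivial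
        exact Set.mem_iUnion.mp this
      choose f hf using this
      classical
      set g : X → ℕ := fun p => if hp : p ∈ S then f p hp else 0 with hg
      refine ⟨hfin.toFinset.sup g, ?_⟩
      intro p hp
      have hle : g p ≤ hfin.toFinset.sup g := Finset.le_sup (hfin.mem_toFinset.mpr hp)
      have hpg : p ∈ A (g p) := by
        show p ∈ A (if hp : p ∈ S then f p hp else 0)
        rw [dif_pos hp]; exact hf p hp
      exact hmono hle hpg
    exact hxA m (hm ⟨m, rfl⟩)
  -- compact + all subsets closed ⇒ finite; contradiction
  apply hSinf
  have hcov : S ⊆ ⋃ p ∈ S, (S \ {p})ᶜ := by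
    intro q hq
    exact Set.mem_biUnion hq (by simp)
  obtain ⟨F, hFS, hFfin, hcov'⟩ := hScomp.elim_finite_subcover_image
    (fun p _ => (hsub (S \ {p}) Set.diff_subset).isOpen_compl) hcov
  apply Set.Finite.subset hFfin
  intro q hq
  obtain ⟨p, hpF, hqp⟩ := Set.mem_iUnion₂.mp (hcov' hq)
  have : q = p := by
    by_contra hne
    exact hqp ⟨hq, hne⟩
  exact this ▸ hpF



/-- The generalized loop in `Z` obtained by pushing forward a generalized loop in `Y`
along a continuous map `f : Y → Z`. -/
def GenLoop.push {N : Type*} {Y Z : Type*} [TopologicalSpace Y] [TopologicalSpace Z]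
    (f : C(Y, Z)) {y : Y} (γ : GenLoop N Y y) : GenLoop N Z (f y) :=
  ⟨f.comp γ.1, fun t ht => by
    show f (γ.1 t) = f y
    rw [γ.2 t ht]⟩

/-- The induced map on homotopy groups of a continuous map. -/
def HomotopyGroup.map {N : Type*} {Y Z : Type*} [TopologicalSpace Y] [TopologicalSpace Z]
    (f : C(Y, Z)) (y : Y) :
    HomotopyGroup N Y y → HomotopyGroup N Z (f y) :=
  Quotient.map (GenLoop.push f) (by
    intro a b hab
    exact hab.map (fun H => H.compContinuousMap f))

/-- The inclusion of a subspace as a continuous map. -/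
def subIncl {X : Type*} [TopologicalSpace X] (A : Set X) : C(A, X) :=
  ⟨Subtype.val, continuous_subtype_val⟩

/-- The inclusion between nested subspaces as a continuous map. -/
def subIncl₂ {X : Type*} [TopologicalSpace X] {A B : Set X} (h : A ⊆ B) : C(A, B) :=
  ⟨Set.inclusion h, continuous_inclusion h⟩

/-- Homotopy groups commute with sequential colimits along closed inclusions of `T1`
spaces: if `X` carries the final topology of an increasing sequence of closed subsets
`A i` (each a `T1` space) covering `X`, then for every `n` the canonical map
`colim_i π_n(A i) → π_n(X)` is bijective, i.e. every class in `π_n(X)` comes from some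
`A i` (surjectivity of the colimit comparison) and two classes from `A i` that agree in
`X` agree in some `A j`, `i ≤ j` (injectivity). -/
theorem homotopyGroup_seq_colimit {X : Type*} [TopologicalSpace X]
    (A : ℕ → Set X) (hmono : Monotone A) (hclosed : ∀ i, IsClosed (A i))
    (hT1 : ∀ i, T1Space (A i))
    (hcover : ⋃ i, A i = Set.univ)
    (hfinal : ∀ S : Set X, IsOpen S ↔ ∀ i, IsOpen ((↑·) ⁻¹' S : Set (A i)))
    (x₀ : X) (hx₀ : x₀ ∈ A 0) (n : ℕ) :
    (∀ α : HomotopyGroup (Fin n) X x₀, ∃ (i : ℕ)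
      (β : HomotopyGroup (Fin n) (A i) ⟨x₀, hmono (Nat.zero_le i) hx₀⟩),
      HomotopyGroup.map (subIncl (A i)) _ β = α) ∧
    (∀ (i : ℕ) (β β' : HomotopyGroup (Fin n) (A i) ⟨x₀, hmono (Nat.zero_le i) hx₀⟩),
      HomotopyGroup.map (subIncl (A i)) _ β = HomotopyGroup.map (subIncl (A i)) _ β' →
      ∃ (j : ℕ) (hij : i ≤ j),
        HomotopyGroup.map (subIncl₂ (hmono hij)) _ β =
          HomotopyGroup.map (subIncl₂ (hmono hij)) _ β') := by
  constructor
  · intro α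
    induction α using Quotient.inductionOn with
    | h γ =>
      obtain ⟨i, hi⟩ := compact_subset_of_seq A hmono hT1 hcover hfinal
        (isCompact_range γ.1.continuous)
      refine ⟨i, ⟦⟨⟨fun t => ⟨γ.1 t, hi (Set.mem_range_self t)⟩,
        γ.1.continuous.subtype_mk _⟩, fun t ht => Subtype.ext (γ.2 t ht)⟩⟧, ?_⟩
      show Quotient.map _ _ _ = _
      show Quotient.mk _ _ = _
      exact congrArg _ (Subtype.ext (ContinuousMap.ext fun t => rfl))
  · refine fun i β β' => Quotient.inductionOn₂ β β' ?_
    intro b b' h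
    obtain ⟨H⟩ : GenLoop.Homotopic (GenLoop.push (subIncl (A i)) b)
        (GenLoop.push (subIncl (A i)) b') := Quotient.exact h
    obtain ⟨j', hj'⟩ := compact_subset_of_seq A hmono hT1 hcover hfinal
      (isCompact_range H.toHomotopy.toContinuousMap.continuous)
    refine ⟨max i j', le_max_left i j', ?_⟩
    set hij := le_max_left i j'
    have hrange : ∀ p : I × (Fin n → I), H p ∈ A (max i j') :=
      fun p => hmono (le_max_right i j') (hj' ⟨p, rfl⟩)
    show Quotient.map _ _ _ = Quotient.map _ _ _
    show Quotient.mk _ _ = Quotient.mk _ _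
    apply Quotient.sound
    refine ⟨{ toFun := fun p => ⟨H p, hrange p⟩
              continuous_toFun := H.toHomotopy.toContinuousMap.continuous.subtype_mk _
              map_zero_left := fun t => Subtype.ext (H.apply_zero t)
              map_one_left := fun t => Subtype.ext (H.apply_one t)
              prop' := fun t y hy => Subtype.ext (H.prop t y hy) }⟩
end
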